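/- Let d ≥ 2 and let ρ_0 be the smaller positive solution of ρ²/(1+ρ²)^{3/2} = 2/(πd). Then 2/(πd − 3) ≤ ρ_0² ≤ 4/((πd − 3) + √((πd − 3)² − 6)). -/

import Mathlib

set_option maxHeartbeats 1000000


/-- Lemma B.2 (first part): for `d ≥ 2`, if `ρ₀` is the smaller positive solution of
`ρ²/(1+ρ²)^{3/2} = 2/(π d)` (i.e. the one lying in `(0, √2)`), then
`2/(π d − 3) ≤ ρ₀² ≤ 4/((π d − 3) + √((π d − 3)² − 6))`. -/
theorem amoeba_stmt18 (d : ℕ) (hd : 2 ≤ d) (ρ₀ : ℝ) (hρpos : 0 < ρ₀)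
    (hρlt : ρ₀ < Real.sqrt 2)
    (hρ : ρ₀ ^ 2 / (1 + ρ₀ ^ 2) ^ ((3 : ℝ) / 2) = 2 / (Real.pi * d)) :
    2 / (Real.pi * d - 3) ≤ ρ₀ ^ 2 ∧
      ρ₀ ^ 2 ≤ 4 / ((Real.pi * d - 3) + Real.sqrt ((Real.pi * d - 3) ^ 2 - 6)) := by
  have hpi : (3 : ℝ) < Real.pi := Real.pi_gt_three
  have hd2 : (2 : ℝ) ≤ (d : ℝ) := by exact_mod_cast hd
  set x : ℝ := ρ₀ ^ 2 with hxdef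
  have hx0 : 0 < x := by positivity
  have hx2 : x < 2 := by
    have h := pow_lt_pow_left₀ hρlt hρpos.le (n := 2) (by norm_num)
    have : Real.sqrt 2 ^ 2 = 2 := Real.sq_sqrt (by norm_num)
    linarith [h, this.le, this.ge]
  have h1x : (0 : ℝ) < 1 + x := by linarith
  set a : ℝ := Real.pi * d - 3 with hadef
  have ha3 : 3 < a := by nlinarith
  have hpd : (0 : ℝ) < Real.pi * d := by nlinarith
  set y : ℝ := (1 + x) ^ ((3 : ℝ) / 2) with hydef
  have hy0 : 0 < y := Real.rpow_pos_of_pos h1x _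
  have hysq : y ^ 2 = (1 + x) ^ 3 := by
    rw [hydef, ← Real.rpow_natCast ((1 + x) ^ ((3:ℝ)/2)) 2, ← Real.rpow_mul h1x.le]
    norm_num
  -- from the equation: π d * x = 2 * y
  have heq : Real.pi * d * x = 2 * y := by
    have h := hρ
    rw [div_eq_div_iff hy0.ne' hpd.ne'] at h
    linarith [h]
  -- lower bound on y
  have hylb : 1 + (3/2) * x ≤ y := by
    have h2 : (1 + (3/2) * x) ^ 2 ≤ y ^ 2 := by
      rw [hysq]; nlinarith [sq_nonneg x, hx0.le]
    exact le_of_pow_le_pow_left₀ two_ne_zero hy0.le h2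
  -- upper bound on y
  have hyub : y ≤ 1 + (3/2) * x + (3/8) * x ^ 2 := by
    have h2 : y ^ 2 ≤ (1 + (3/2) * x + (3/8) * x ^ 2) ^ 2 := by
      rw [hysq]; nlinarith [sq_nonneg x, hx0.le, pow_nonneg hx0.le 3, pow_nonneg hx0.le 4]
    exact le_of_pow_le_pow_left₀ two_ne_zero (by positivity) h2
  have hlow : a * x ≥ 2 := by nlinarith
  have hup : a * x ≤ 2 + (3/4) * x ^ 2 := by nlinarith
  constructor
  · rw [div_le_iff₀ (by linarith : (0:ℝ) < a)]
    linarith [hlow]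
  · set s : ℝ := Real.sqrt (a ^ 2 - 6) with hsdef
    have hs0 : 0 ≤ s := Real.sqrt_nonneg _
    have hssq : s ^ 2 = a ^ 2 - 6 := Real.sq_sqrt (by nlinarith)
    have has : 0 < a + s := by linarith
    rw [le_div_iff₀ has]
    -- key: 2a - 3x ≥ 2s
    have hkey : 2 * s ≤ 2 * a - 3 * x := by
      have hpos : (0:ℝ) ≤ 2 * a - 3 * x := by nlinarith
      have hsq : (2 * s) ^ 2 ≤ (2 * a - 3 * x) ^ 2 := by nlinarith [hssq, hup]
      exact le_of_pow_le_pow_left₀ two_ne_zero hpos hsq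
    have h3 : 3 * x * (a + s) ≤ (2 * a - 2 * s) * (a + s) :=
      mul_le_mul_of_nonneg_right (by linarith) has.le
    nlinarith [h3, hssq]
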